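/- Let n ≥ 1, let A be a linearly ordered alphabet, and let X ⊆ A^n be a finite subset stable under the cyclic shift c. Suppose there is a non-constant word w ∈ X whose C-orbit is free (its n cyclic shifts are pairwise distinct) and such that every non-constant word of X lies in the C-orbit of w; thus X consists of some constant words together with this single free orbit. Then (X, X^maj(t), C) exhibits the cyclic sieving phenomenon if and only if gcd(n, cdes(w)) = 1. -/

import Mathlib

/-- The (leftward) cyclic shift on words of length `n`:
`c(w₁,…,wₙ) = (w₂,…,wₙ,w₁)`. -/
def cshift {A : Type*} {n : ℕ} (w : Fin n → A) : Fin n → A :=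
  fun i => w ⟨((i : ℕ) + 1) % n, Nat.mod_lt _ i.pos⟩

/-- The major index of a word: `maj w = Σ_{1 ≤ i ≤ n-1, w_i > w_{i+1}} i`
(here positions are 0-indexed, so position `i : Fin n` is the `(i+1)`-st letter). -/
def majIdx {A : Type*} [LinearOrder A] {n : ℕ} (w : Fin n → A) : ℕ :=
  ∑ i : Fin n,
    if h : (i : ℕ) + 1 < n then (if w ⟨(i : ℕ) + 1, h⟩ < w i then (i : ℕ) + 1 else 0) else 0

/-- The number of cyclic descents of a word, `cdes w = #{i : w_i > w_{i+1}}`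
with indices read cyclically (`w_{n+1} := w_1`). -/
def cdes {A : Type*} [LinearOrder A] {n : ℕ} (w : Fin n → A) : ℕ :=
  (Finset.univ.filter fun i : Fin n =>
    w ⟨((i : ℕ) + 1) % n, Nat.mod_lt _ i.pos⟩ < w i).card

/-- The inversion number of a word: `inv w = #{(i,j) : i < j, w_i > w_j}`. -/
def invNum {A : Type*} [LinearOrder A] {n : ℕ} (w : Fin n → A) : ℕ :=
  (Finset.univ.filter fun p : Fin n × Fin n => p.1 < p.2 ∧ w p.2 < w p.1).card

/-- The Hamming weight of a binary word: the number of ones. -/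
def wt {n : ℕ} (w : Fin n → Bool) : ℕ :=
  (Finset.univ.filter fun i => w i = true).card

/-- The triple `(X, Σ_{x ∈ X} t^{stat x}, C)` exhibits the cyclic sieving phenomenon,
where `C` is the cyclic group of order `n` generated by the cyclic shift `c` acting on `X`:
for every `d`, the number of fixed points of `c^d` on `X` equals the evaluation of
`Σ_{x ∈ X} t^{stat x}` at `t = ζ^d`, with `ζ = exp(2πi/n)`. -/
def exhibitsCSP {A : Type*} [DecidableEq A] {n : ℕ} (X : Finset (Fin n → A))
    (stat : (Fin n → A) → ℕ) : Prop :=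
  ∀ d : ℕ,
    ((X.filter fun v => cshift^[d] v = v).card : ℂ) =
      ∑ v ∈ X, Complex.exp (2 * (Real.pi : ℂ) * Complex.I / n) ^ (d * stat v)

section aux
variable {A : Type*} {n : ℕ} [NeZero n]

lemma fin_mk_succ (i : Fin n) :
    (⟨((i : ℕ) + 1) % n, Nat.mod_lt _ i.pos⟩ : Fin n) = i + 1 := by
  ext
  simp only [Fin.val_add, Fin.val_one']
  conv_rhs => rw [← Nat.mod_eq_of_lt i.isLt, ← Nat.add_mod]

lemma cshift_apply (v : Fin n → A) (i : Fin n) : cshift v i = v (i + 1) := by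
  rw [cshift, fin_mk_succ]

open Fin.NatCast in
lemma cshift_iterate (v : Fin n → A) (k : ℕ) (i : Fin n) :
    cshift^[k] v i = v (i + (k : Fin n)) := by
  induction k generalizing v with
  | zero => simp
  | succ k ih =>
    rw [Function.iterate_succ_apply, ih (cshift v), cshift_apply]
    congr 1
    push_cast
    rw [add_assoc]

end aux

section aux2
variable {A : Type*} [LinearOrder A] {n : ℕ} [NeZero n]

lemma majIdx_cast (v : Fin n → A) :
    (majIdx v : ZMod n) = ∑ i : Fin n, if v (i + 1) < v i then ((i : ℕ) + 1 : ZMod n) else 0 := by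
  rw [majIdx, Nat.cast_sum]
  refine Finset.sum_congr rfl fun i _ => ?_
  by_cases h : (i : ℕ) + 1 < n
  · have : (⟨(i : ℕ) + 1, h⟩ : Fin n) = i + 1 := by
      rw [← fin_mk_succ i]
      ext
      simp [Nat.mod_eq_of_lt h]
    rw [dif_pos h, this]
    split <;> simp
  · have hn : (i : ℕ) + 1 = n := by omega
    have : (i + 1 : Fin n) = ⟨0, Nat.pos_of_ne_zero (NeZero.ne n)⟩ := by
      rw [← fin_mk_succ i]; ext; simp [hn]
    rw [dif_neg h]
    split
    · rw [show ((i : ℕ) : ZMod n) + 1 = ((((i : ℕ) + 1 : ℕ)) : ZMod n) from by push_cast; ring,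
        hn]
      simp
    · simp

lemma cdes_eq_sum (v : Fin n → A) :
    (cdes v : ZMod n) = ∑ i : Fin n, if v (i + 1) < v i then (1 : ZMod n) else 0 := by
  rw [cdes]
  simp only [fin_mk_succ]
  rw [Finset.card_filter]
  push_cast
  rfl

lemma cdes_cshift (v : Fin n → A) : cdes (cshift v) = cdes v := by
  rw [cdes, cdes]
  simp only [fin_mk_succ, cshift_apply]
  exact Finset.card_nbij (fun i => i + 1) (fun a ha => by simpa using ha) (fun a _ b _ h => by simpa using h)
    (fun j hj => ⟨j - 1, by simpa using hj, by simp⟩)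

lemma maj_cshift (v : Fin n → A) :
    (majIdx (cshift v) : ZMod n) = (majIdx v : ZMod n) - (cdes v : ZMod n) := by
  rw [majIdx_cast, majIdx_cast, cdes_eq_sum, ← Finset.sum_sub_distrib]
  simp only [cshift_apply]
  have key : ∀ i : Fin n, (if v (i + 1 + 1) < v (i + 1) then ((i : ℕ) + 1 : ZMod n) else 0)
      = (fun j : Fin n => if v (j + 1) < v j then ((j : ℕ) : ZMod n) else 0) (i + 1) := by
    intro i
    have : (((i + 1 : Fin n) : ℕ) : ZMod n) = ((i : ℕ) + 1 : ZMod n) := by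
      rw [Fin.val_add, Fin.val_one']
      rw [ZMod.natCast_mod]
      push_cast
      rw [ZMod.natCast_mod]
      simp
    simp only [this]
  rw [Finset.sum_congr rfl fun i _ => key i]
  refine Eq.trans (Fintype.sum_equiv (Equiv.addRight (1 : Fin n)) _
    (fun j : Fin n => if v (j + 1) < v j then ((j : ℕ) : ZMod n) else 0) (fun i => rfl)) ?_
  refine Finset.sum_congr rfl fun j _ => ?_
  split_ifs <;> ring

lemma maj_iterate (v : Fin n → A) (r : ℕ) :
    (majIdx (cshift^[r] v) : ZMod n) = (majIdx v : ZMod n) - r * (cdes v : ZMod n) := by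
  induction r generalizing v with
  | zero => simp
  | succ r ih =>
    rw [Function.iterate_succ_apply, ih (cshift v), maj_cshift, cdes_cshift]
    push_cast
    ring

end aux2

section aux3
variable {A : Type*} [LinearOrder A] {n : ℕ} [NeZero n]

open Fin.NatCast in
lemma cshift_iterate_mod (v : Fin n → A) (a : ℕ) : cshift^[a] v = cshift^[a % n] v := by
  funext i
  rw [cshift_iterate, cshift_iterate]
  congr 1
  ext
  rw [Fin.val_add, Fin.val_add, Fin.val_natCast, Fin.val_natCast,
    Nat.mod_mod_of_dvd a dvd_rfl]

lemma majIdx_const (v : Fin n → A) (hc : ∀ i j, v i = v j) : majIdx v = 0 := by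
  rw [majIdx]
  refine Finset.sum_eq_zero fun i _ => ?_
  split
  · rw [if_neg (by rw [hc _ i]; exact lt_irrefl _)]
  · rfl

lemma cshift_const (v : Fin n → A) (hc : ∀ i j, v i = v j) : cshift v = v := by
  funext i
  rw [cshift_apply]
  exact hc _ _

end aux3

/-- if a shift-stable X ⊆ A^n has all its non-constant words lying in a
single free C-orbit, represented by the word w, then (X, X^maj(t), C) exhibits
the CSP if and only if gcd(n, cdes w) = 1. -/
theorem stmt9 {A : Type*} [LinearOrder A] {n : ℕ} (hn : 1 ≤ n)
    (X : Finset (Fin n → A)) (hX : ∀ v ∈ X, cshift v ∈ X)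
    (w : Fin n → A) (hw : w ∈ X) (hnc : ∃ i j, w i ≠ w j)
    (hfree : ∀ i j : Fin n, cshift^[(i : ℕ)] w = cshift^[(j : ℕ)] w → i = j)
    (horb : ∀ v ∈ X, (∃ i j, v i ≠ v j) → ∃ r : ℕ, v = cshift^[r] w) :
    exhibitsCSP X majIdx ↔ Nat.gcd n (cdes w) = 1 := by
  have hn0 : n ≠ 0 := by omega
  haveI : NeZero n := ⟨hn0⟩
  set ζ : ℂ := Complex.exp (2 * (Real.pi : ℂ) * Complex.I / n) with hζdef
  have hζ : IsPrimitiveRoot ζ n := Complex.isPrimitiveRoot_exp n hn0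
  -- freeness in ℕ form
  have hfree' : ∀ a b : ℕ, cshift^[a] w = cshift^[b] w ↔ a % n = b % n := by
    intro a b
    constructor
    · intro h
      rw [cshift_iterate_mod w a, cshift_iterate_mod w b] at h
      simpa using hfree ⟨a % n, Nat.mod_lt _ (by omega)⟩ ⟨b % n, Nat.mod_lt _ (by omega)⟩ h
    · intro h
      rw [cshift_iterate_mod w a, cshift_iterate_mod w b, h]
  -- the orbit
  set O : Finset (Fin n → A) := (Finset.range n).image (fun r => cshift^[r] w) with hOdef
  have hiterX : ∀ r : ℕ, cshift^[r] w ∈ X := by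
    intro r
    induction r with
    | zero => exact hw
    | succ r ih => rw [Function.iterate_succ_apply']; exact hX _ ih
  have hOX : O ⊆ X := by
    intro v hv
    simp only [hOdef, Finset.mem_image, Finset.mem_range] at hv
    obtain ⟨r, _, rfl⟩ := hv
    exact hiterX r
  have hinj : Set.InjOn (fun r => cshift^[r] w) (Finset.range n) := by
    intro a ha b hb h
    simp only [Finset.coe_range, Set.mem_Iio] at ha hb
    have := (hfree' a b).1 h
    rwa [Nat.mod_eq_of_lt ha, Nat.mod_eq_of_lt hb] at this
  have hOcard : O.card = n := by
    rw [hOdef, Finset.card_image_of_injOn hinj, Finset.card_range]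
  -- constants
  have hconst : ∀ v ∈ X \ O, ∀ i j, v i = v j := by
    intro v hv i j
    rw [Finset.mem_sdiff] at hv
    by_contra hne
    obtain ⟨r, rfl⟩ := horb v hv.1 ⟨i, j, hne⟩
    exact hv.2 (by
      rw [cshift_iterate_mod w r]
      exact Finset.mem_image.2 ⟨r % n, Finset.mem_range.2 (Nat.mod_lt _ (by omega)), rfl⟩)
  have hKfix : ∀ v ∈ X \ O, ∀ d : ℕ, cshift^[d] v = v := fun v hv d =>
    Function.iterate_fixed (cshift_const v (hconst v hv)) d
  -- fixed points on the orbit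
  have hOfix : ∀ d : ℕ, ∀ v ∈ O, (cshift^[d] v = v ↔ n ∣ d) := by
    intro d v hv
    simp only [hOdef, Finset.mem_image, Finset.mem_range] at hv
    obtain ⟨r, hr, rfl⟩ := hv
    rw [← Function.iterate_add_apply, hfree' (d + r) r]
    constructor
    · intro h
      have h1 : d + r ≡ 0 + r [MOD n] := by simpa [Nat.ModEq] using h
      have h2 := Nat.ModEq.add_right_cancel' r h1
      exact Nat.modEq_zero_iff_dvd.1 h2
    · intro ⟨k, hk⟩
      subst hk
      simp [Nat.add_mul_mod_self_left, Nat.mul_add_mod]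
  -- counting fixed points
  have hcount : ∀ d : ℕ, ((X.filter fun v => cshift^[d] v = v).card : ℂ) =
      ((X \ O).card : ℂ) + (if n ∣ d then (n : ℂ) else 0) := by
    intro d
    have hsplit : (X.filter fun v => cshift^[d] v = v) =
        ((X \ O).filter fun v => cshift^[d] v = v) ∪ (O.filter fun v => cshift^[d] v = v) := by
      rw [← Finset.filter_union, Finset.sdiff_union_of_subset hOX]
    rw [hsplit, Finset.card_union_of_disjoint
      (Finset.disjoint_filter_filter Finset.sdiff_disjoint),
      Finset.filter_true_of_mem (fun v hv => hKfix v hv d)]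
    by_cases hd : n ∣ d
    · rw [Finset.filter_true_of_mem (fun v hv => (hOfix d v hv).2 hd), if_pos hd, hOcard]
      push_cast; ring
    · rw [Finset.filter_false_of_mem (fun v hv h => hd ((hOfix d v hv).1 h)), if_neg hd]
      simp
  -- the exponential sum
  have hpowmod : ∀ a : ℕ, ζ ^ a = ζ ^ (a % n) := by
    intro a
    conv_lhs => rw [← Nat.div_add_mod a n]
    rw [pow_add, pow_mul, hζ.pow_eq_one, one_pow, one_mul]
  have hpow : ∀ a b : ℕ, (a : ZMod n) = (b : ZMod n) → ζ ^ a = ζ ^ b := by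
    intro a b h
    rw [hpowmod a, hpowmod b, show a % n = b % n from (ZMod.natCast_eq_natCast_iff a b n).1 h]
  have hcastn1 : ((n - 1 : ℕ) : ZMod n) = -1 := by
    have h0 : ((n - 1 + 1 : ℕ) : ZMod n) = 0 := by rw [Nat.sub_add_cancel hn, ZMod.natCast_self]
    push_cast at h0
    linear_combination h0
  have hsum : ∀ d : ℕ, (∑ v ∈ X, ζ ^ (d * majIdx v)) =
      ((X \ O).card : ℂ) + ζ ^ (d * majIdx w) * (if n ∣ d * cdes w then (n : ℂ) else 0) := by
    intro d
    rw [← Finset.sum_sdiff hOX]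
    have h1 : (∑ v ∈ X \ O, ζ ^ (d * majIdx v)) = ((X \ O).card : ℂ) := by
      rw [Finset.sum_congr rfl fun v hv => by
        rw [majIdx_const v (hconst v hv), Nat.mul_zero, pow_zero]]
      simp
    have h2 : (∑ v ∈ O, ζ ^ (d * majIdx v)) =
        ζ ^ (d * majIdx w) * (if n ∣ d * cdes w then (n : ℂ) else 0) := by
      rw [hOdef, Finset.sum_image (fun a ha b hb h => hinj (by simpa using ha) (by simpa using hb) h)]
      set e : ℕ := (n - 1) * d * cdes w with hedef
      have hterm : ∀ r ∈ Finset.range n,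
          ζ ^ (d * majIdx (cshift^[r] w)) = ζ ^ (d * majIdx w) * (ζ ^ e) ^ r := by
        intro r _
        rw [← pow_mul, ← pow_add]
        refine hpow _ _ ?_
        push_cast
        rw [maj_iterate, hedef]
        push_cast
        rw [hcastn1]
        ring
      rw [Finset.sum_congr rfl hterm, ← Finset.mul_sum]
      congr 1
      have hdvd_iff : ζ ^ e = 1 ↔ n ∣ d * cdes w := by
        rw [hζ.pow_eq_one_iff_dvd]
        rw [← ZMod.natCast_eq_zero_iff, ← ZMod.natCast_eq_zero_iff, hedef]
        push_cast
        rw [hcastn1]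
        constructor
        · intro h; linear_combination -h
        · intro h; linear_combination -h
      by_cases hμ : ζ ^ e = 1
      · rw [if_pos (hdvd_iff.1 hμ), hμ]
        simp
      · rw [if_neg (fun h => hμ (hdvd_iff.2 h)), geom_sum_eq hμ n]
        have : (ζ ^ e) ^ n = 1 := by
          rw [← pow_mul]
          exact hζ.pow_eq_one_iff_dvd _ |>.2 ⟨e, mul_comm e n⟩
        rw [this]
        simp
    rw [h1, h2]
  -- conclude
  constructor
  · intro hCSP
    by_contra hg
    set g := Nat.gcd n (cdes w) with hgdef
    have hg0 : g ≠ 0 := fun h => hn0 (Nat.eq_zero_of_gcd_eq_zero_left (hgdef ▸ h))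
    have hg2 : 2 ≤ g := by omega
    set d := n / g with hddef
    have hgn : g ∣ n := Nat.gcd_dvd_left _ _
    have hnd : n = g * d := (Nat.mul_div_cancel' hgn).symm
    have hd0 : d ≠ 0 := fun h => hn0 (by rw [hnd, h, Nat.mul_zero])
    have h2d : 2 * d ≤ n := by rw [hnd]; exact Nat.mul_le_mul_right d hg2
    have hdn : ¬ n ∣ d := by
      intro h
      have := Nat.le_of_dvd (by omega) h
      omega
    have hdc : n ∣ d * cdes w := by
      obtain ⟨m, hm⟩ := Nat.gcd_dvd_right n (cdes w)
      exact ⟨m, by rw [← hgdef] at hm; rw [hm, hnd]; ring⟩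
    have := hCSP d
    rw [hcount d, hsum d, if_neg hdn, if_pos hdc] at this
    have hz : ζ ^ (d * majIdx w) * (n : ℂ) = 0 := by linear_combination -this
    rcases mul_eq_zero.1 hz with h | h
    · exact pow_ne_zero _ (hζ.ne_zero hn0) h
    · exact hn0 (Nat.cast_eq_zero.1 h)
  · intro hg d
    rw [hcount d, hsum d]
    have hcop : Nat.Coprime n (cdes w) := hg
    have hiff : n ∣ d * cdes w ↔ n ∣ d :=
      ⟨fun h => hcop.dvd_of_dvd_mul_right h, fun h => h.mul_right _⟩
    by_cases hd : n ∣ d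
    · rw [if_pos hd, if_pos (hiff.2 hd)]
      have : ζ ^ (d * majIdx w) = 1 := hζ.pow_eq_one_iff_dvd _ |>.2 (hd.mul_right _)
      rw [this, one_mul]
    · rw [if_neg hd, if_neg (fun h => hd (hiff.1 h))]
      ring
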